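/- Let m > 1 be an integer, set n = 2^m, and let t be an integer with n/2 < t ≤ (n + m − 1)/2. Then there exists an (n,t)-cooling code of size M > 2^{n−t−1}. -/

import Mathlib

/-- An `(n,t)`-cooling code of size `M` over coefficients `F`: `M` pairwise disjoint
subsets (codesets) of `F^n` such that for every `t`-subset `S` of coordinates and every
codeset, some vector in the codeset has support disjoint from `S`. -/
def IsCoolingCode (F : Type*) [Zero F] (n t M : ℕ)
    (C : Fin M → Set (Fin n → F)) : Prop :=
  (∀ i j : Fin M, i ≠ j → Disjoint (C i) (C j)) ∧
  ∀ S : Finset (Fin n), S.card = t → ∀ i : Fin M,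
    ∃ x ∈ C i, ∀ j ∈ S, x j = 0

private lemma aux_two_pow (m : ℕ) (hm : 3 ≤ m) : 2 * m + 1 ≤ 2 ^ m := by
  induction m, hm using Nat.le_induction with
  | base => norm_num
  | succ k hk ih => rw [pow_succ]; omega

private lemma zmod2_ne_zero (z : ZMod 2) : z ≠ 0 ↔ z = 1 := by revert z; decide

private lemma zmod2_add_self (z : ZMod 2) : z + z = 0 := by revert z; decide

set_option maxHeartbeats 1000000 in
private lemma exists_code (m n t : ℕ) (hm3 : 3 ≤ m) (hn : n = 2 ^ m)
    (h1 : n < 2 * t) (h2 : 2 * t ≤ n + m - 1) :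
    ∃ C : Fin (2 ^ (n - t - 1) + 1) → Set (Fin n → ZMod 2),
      IsCoolingCode (ZMod 2) n t (2 ^ (n - t - 1) + 1) C := by
  classical
  -- numeric facts
  have hpow2 : 2 ^ m = 2 * 2 ^ (m - 1) := by
    conv_lhs => rw [show m = (m - 1) + 1 by omega]
    rw [pow_succ]; ring
  have hpowm : 2 * m + 1 ≤ 2 ^ m := aux_two_pow m hm3
  set a := n - t - 1 with ha
  set k := t - m with hk
  have htm : m + 2 ≤ t := by omega
  have htn : t + 2 ≤ n := by omega
  have hka : k ≤ a := by omega
  have ha1 : 1 ≤ a := by omega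
  have hdP : n - t + 1 ≤ 2 ^ (m - 1) := by omega
  have hak : a + k = n - m - 1 := by omega
  -- spaces
  let E := Fin m → ZMod 2
  let D := Module.Dual (ZMod 2) E
  let V := Fin n → ZMod 2
  let K := GaloisField 2 a
  let X := Fin k → ZMod 2
  letI : Fintype K := Fintype.ofFinite K
  -- coordinates indexed by points of F_2^m
  let σ : Fin n ≃ E := Fintype.equivOfCardEq (by
    simp [E, Fintype.card_fun, hn])
  -- the affine-functions code (first-order Reed-Muller code)
  let φ : (D × ZMod 2) →ₗ[ZMod 2] V :=
    { toFun := fun p => fun j => p.1 (σ j) + p.2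
      map_add' := by
        intro p q; funext j
        show (p.1 + q.1) (σ j) + (p.2 + q.2) = (p.1 (σ j) + p.2) + (q.1 (σ j) + q.2)
        rw [LinearMap.add_apply]; ring
      map_smul' := by
        intro c p; funext j
        show (c • p.1) (σ j) + c • p.2 = c • (p.1 (σ j) + p.2)
        rw [LinearMap.smul_apply, smul_eq_mul, smul_eq_mul, smul_eq_mul]
        ring }
  have hφinj : Function.Injective φ := by
    rw [injective_iff_map_eq_zero]
    rintro ⟨l, c⟩ h
    have h0 : ∀ j : Fin n, l (σ j) + c = 0 := fun j => congrFun h j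
    have hc : c = 0 := by
      have := h0 (σ.symm 0)
      simpa using this
    have hl : l = 0 := by
      apply LinearMap.ext; intro u
      have := h0 (σ.symm u)
      simp [hc] at this
      simpa using this
    simp [hl, hc, Prod.ext_iff]
  -- weight bound for nonzero affine functions
  have hweight : ∀ p : D × ZMod 2, p ≠ 0 →
      2 ^ (m - 1) ≤ (Finset.univ.filter (fun j => φ p j ≠ 0)).card := by
    rintro ⟨l, c⟩ hp
    -- transfer the count to E
    have hcnt : (Finset.univ.filter (fun j : Fin n => φ (l, c) j ≠ 0)).card
        = (Finset.univ.filter (fun u : E => l u + c ≠ 0)).card := by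
      apply Finset.card_bij' (fun j _ => σ j) (fun u _ => σ.symm u)
      · intro j hj
        simp only [Finset.mem_filter, Finset.mem_univ, true_and] at hj ⊢
        exact hj
      · intro u hu
        simp only [Finset.mem_filter, Finset.mem_univ, true_and] at hu ⊢
        show φ (l, c) (σ.symm u) ≠ 0
        show l (σ (σ.symm u)) + c ≠ 0
        simpa using hu
      · intro j _; simp
      · intro u _; simp
    rw [hcnt]
    by_cases hl : l = 0
    · have hc : c = 1 := by
        rw [← zmod2_ne_zero]
        intro hc0
        exact hp (by simp [hl, hc0, Prod.ext_iff])
      have : (Finset.univ.filter (fun u : E => l u + c ≠ 0)) = Finset.univ := by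
        apply Finset.filter_true_of_mem
        intro u _
        rw [hl, hc]
        show (0 : D) u + 1 ≠ 0
        rw [LinearMap.zero_apply]
        decide
      rw [this, Finset.card_univ]
      have : Fintype.card E = 2 ^ m := by simp [E, Fintype.card_fun]
      omega
    · obtain ⟨u₀, hu₀⟩ : ∃ u₀, l u₀ ≠ 0 := by
        by_contra hno
        push_neg at hno
        exact hl (LinearMap.ext fun u => hno u)
      have hu₀1 : l u₀ = 1 := (zmod2_ne_zero _).mp hu₀
      have hsplit := Finset.card_filter_add_card_filter_not
        (s := (Finset.univ : Finset E)) (p := fun u => l u + c ≠ 0)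
      have hbij : (Finset.univ.filter (fun u : E => l u + c ≠ 0)).card
          = (Finset.univ.filter (fun u : E => ¬ (l u + c ≠ 0))).card := by
        apply Finset.card_bij' (fun u _ => u + u₀) (fun u _ => u + u₀)
        · intro u hu
          simp only [Finset.mem_filter, Finset.mem_univ, true_and, not_not] at hu ⊢
          have : l (u + u₀) + c = (l u + c) + 1 := by
            rw [map_add, hu₀1]; ring
          rw [this]
          revert hu
          generalize (l u + c) = z
          revert z; decide
        · intro u hu
          simp only [Finset.mem_filter, Finset.mem_univ, true_and, not_not] at hu ⊢
          have : l (u + u₀) + c = (l u + c) + 1 := by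
            rw [map_add, hu₀1]; ring
          rw [this, hu]
          decide
        · intro u _
          funext j
          show u j + u₀ j + u₀ j = u j
          rw [add_assoc, zmod2_add_self, add_zero]
        · intro u _
          funext j
          show u j + u₀ j + u₀ j = u j
          rw [add_assoc, zmod2_add_self, add_zero]
      have hcardE : Fintype.card E = 2 ^ m := by simp [E, Fintype.card_fun]
      rw [Finset.card_univ, hcardE] at hsplit
      omega
  -- complement of the RM code
  obtain ⟨Q, hQ⟩ := Submodule.exists_isCompl (LinearMap.range φ)
  have hV : Module.finrank (ZMod 2) V = n := by
    simp [V, Module.finrank_pi]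
  have hrangeφ : Module.finrank (ZMod 2) (LinearMap.range φ) = m + 1 := by
    rw [LinearMap.finrank_range_of_inj hφinj, Module.finrank_prod,
      Subspace.dual_finrank_eq]
    simp [E, Module.finrank_pi]
  have hQr : Module.finrank (ZMod 2) Q = a + k := by
    have hsum := Submodule.finrank_add_eq_of_isCompl hQ
    rw [hrangeφ, hV] at hsum
    omega
  have hfinK : Module.finrank (ZMod 2) K = a := GaloisField.finrank 2 (by omega)
  have hXK : Module.finrank (ZMod 2) (X × K) = a + k := by
    rw [Module.finrank_prod, hfinK]
    simp [X, Module.finrank_pi]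
    omega
  obtain ⟨ε⟩ := FiniteDimensional.nonempty_linearEquiv_of_finrank_eq (hXK.trans hQr.symm)
  let ρ : (X × K) →ₗ[ZMod 2] V := Q.subtype.comp ε.toLinearMap
  have hρQ : ∀ z, ρ z ∈ Q := fun z => (ε z).2
  have hρinj : Function.Injective ρ := Q.injective_subtype.comp ε.injective
  -- an embedding of X into K
  let bK : Module.Basis (Fin a) (ZMod 2) K :=
    (Module.finBasis (ZMod 2) K).reindex (finCongr hfinK)
  let v : Fin k → K := fun i => bK (Fin.castLE hka i)
  have hvli : LinearIndependent (ZMod 2) v :=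
    bK.linearIndependent.comp _ (Fin.castLE_injective hka)
  let ι : X →ₗ[ZMod 2] K := Fintype.linearCombination (ZMod 2) v
  have hιinj : Function.Injective ι := by
    rw [injective_iff_map_eq_zero]
    intro x hx
    have hx' : ∑ i, x i • v i = 0 := by
      rw [← Fintype.linearCombination_apply (R := ZMod 2) v x]
      exact hx
    have := Fintype.linearIndependent_iff.mp hvli x hx'
    funext i
    exact this i
  -- the partial spread family
  let uo : Option K → (X →ₗ[ZMod 2] X × K) := fun o =>
    match o with
    | none => LinearMap.prod 0 ι
    | some α => LinearMap.prod LinearMap.id ((LinearMap.mulLeft (ZMod 2) α).comp ι)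
  have huo_apply : ∀ (α : K) (x : X), uo (some α) x = (x, α * ι x) := fun α x => rfl
  have huo_none : ∀ (x : X), uo none x = (0, ι x) := fun x => rfl
  have huinj : ∀ o, Function.Injective (uo o) := by
    intro o
    rw [injective_iff_map_eq_zero]
    intro x hx
    match o with
    | none =>
      rw [huo_none, Prod.ext_iff] at hx
      exact hιinj (by simpa using hx.2)
    | some α =>
      rw [huo_apply, Prod.ext_iff] at hx
      exact hx.1
  have hkey : ∀ o o' : Option K, o ≠ o' → ∀ x x' : X, uo o x = uo o' x' →
      x = 0 ∧ x' = 0 := by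
    intro o o' hne x x' h
    match o, o' with
    | none, none => exact absurd rfl hne
    | some α, none =>
      rw [huo_apply, huo_none, Prod.mk.injEq] at h
      obtain ⟨h1, h2⟩ := h
      have hx'0 : x' = 0 := by
        have hzero : ι x' = 0 := by rw [← h2, h1]; simp
        exact hιinj (by simpa using hzero)
      exact ⟨h1, hx'0⟩
    | none, some α =>
      rw [huo_none, huo_apply, Prod.mk.injEq] at h
      obtain ⟨h1, h2⟩ := h
      have hx0 : x = 0 := by
        have hzero : ι x = 0 := by rw [h2, ← h1]; simp
        exact hιinj (by simpa using hzero)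
      exact ⟨hx0, h1.symm⟩
    | some α, some β =>
      rw [huo_apply, huo_apply, Prod.mk.injEq] at h
      obtain ⟨h1, h2⟩ := h
      have hαβ : α ≠ β := fun hc => hne (by rw [hc])
      subst h1
      have : (α - β) * ι x = 0 := by
        rw [sub_mul, h2, sub_self]
      rcases mul_eq_zero.mp this with hc | hc
      · exact absurd (sub_eq_zero.mp hc) hαβ
      · have hx0 : x = 0 := hιinj (by simpa using hc)
        exact ⟨hx0, hx0⟩
  -- the codeset subspaces
  let Θ : Option K → (((D × ZMod 2) × X) →ₗ[ZMod 2] V) := fun o =>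
    φ.comp (LinearMap.fst _ _ _) + (ρ.comp (uo o)).comp (LinearMap.snd _ _ _)
  have hΘ_apply : ∀ o p x, Θ o (p, x) = φ p + ρ (uo o x) := by
    intro o p x
    simp [Θ, LinearMap.add_apply]
  -- splitting lemma : if φ p = ρ z then both vanish
  have hsplitRQ : ∀ (p : D × ZMod 2) (z : X × K), φ p = ρ z → φ p = 0 ∧ ρ z = 0 := by
    intro p z hpz
    have hmem : φ p ∈ LinearMap.range φ ⊓ Q := by
      refine ⟨LinearMap.mem_range_self φ p, ?_⟩
      rw [hpz]; exact hρQ z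
    rw [hQ.inf_eq_bot] at hmem
    exact ⟨hmem, by rw [← hpz]; exact hmem⟩
  have hΘinj : ∀ o, Function.Injective (Θ o) := by
    intro o
    rw [injective_iff_map_eq_zero]
    rintro ⟨p, x⟩ h
    rw [hΘ_apply] at h
    have hφρ : φ p = ρ (-(uo o x)) := by
      rw [map_neg]
      rw [eq_neg_iff_add_eq_zero]
      exact h
    obtain ⟨hφ0, hρ0⟩ := hsplitRQ _ _ hφρ
    have hp0 : p = 0 := hφinj (by simpa using hφ0)
    have hx0 : x = 0 := by
      have : ρ (uo o x) = 0 := by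
        rw [map_neg] at hρ0
        simpa using hρ0
      have : uo o x = 0 := hρinj (by simpa using this)
      exact huinj o (by simpa using this)
    simp [hp0, hx0, Prod.ext_iff]
  have hΘrank : ∀ o, Module.finrank (ZMod 2) (LinearMap.range (Θ o)) = t + 1 := by
    intro o
    rw [LinearMap.finrank_range_of_inj (hΘinj o), Module.finrank_prod,
      Module.finrank_prod, Subspace.dual_finrank_eq]
    have h1 : Module.finrank (ZMod 2) E = m := by simp [E, Module.finrank_pi]
    have h2 : Module.finrank (ZMod 2) X = k := by simp [X, Module.finrank_pi]
    have h3 : Module.finrank (ZMod 2) (ZMod 2) = 1 := Module.finrank_self _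
    rw [h1, h2, h3]
    omega
  -- indexing
  have hcardK : Fintype.card K = 2 ^ a := by
    rw [← Nat.card_eq_fintype_card]
    exact GaloisField.card 2 a (by omega)
  let e2 : Fin (2 ^ a + 1) ≃ Option K := Fintype.equivOfCardEq (by
    simp [Fintype.card_option, hcardK])
  -- the codesets
  refine ⟨fun i => {w | w ∈ LinearMap.range (Θ (e2 i)) ∧ w ≠ 0 ∧
      (Finset.univ.filter (fun j => w j ≠ 0)).card ≤ n - t}, ?_, ?_⟩
  · -- pairwise disjoint
    intro i j hij
    rw [Set.disjoint_left]
    rintro w ⟨⟨z, hz⟩, hw0, hwt⟩ ⟨⟨z', hz'⟩, _, _⟩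
    have hoo : e2 i ≠ e2 j := fun hc => hij (e2.injective hc)
    have heq : φ z.1 + ρ (uo (e2 i) z.2) = φ z'.1 + ρ (uo (e2 j) z'.2) := by
      rw [← hΘ_apply, ← hΘ_apply]
      rw [hz, hz']
    have heq2 : φ (z.1 - z'.1) = ρ (uo (e2 j) z'.2 - uo (e2 i) z.2) := by
      rw [map_sub, map_sub]
      linear_combination heq
    obtain ⟨hφ0, hρ0⟩ := hsplitRQ _ _ heq2
    have hu : uo (e2 i) z.2 = uo (e2 j) z'.2 := by
      have : uo (e2 j) z'.2 - uo (e2 i) z.2 = 0 := hρinj (by simpa using hρ0)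
      have := sub_eq_zero.mp this
      exact this.symm
    obtain ⟨hx0, hx'0⟩ := hkey _ _ hoo _ _ hu
    have hwφ : w = φ z.1 := by
      rw [← hz, hΘ_apply, hx0]
      simp
    have hp0 : z.1 ≠ 0 := by
      intro hc
      exact hw0 (by rw [hwφ, hc, map_zero])
    have := hweight z.1 hp0
    rw [← hwφ] at this
    omega
  · -- hitting property
    intro S hS i
    let π : V →ₗ[ZMod 2] ({x // x ∈ S} → ZMod 2) :=
      LinearMap.funLeft (ZMod 2) (ZMod 2) (fun j => (j : Fin n))
    have hπsurj : Function.Surjective π :=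
      LinearMap.funLeft_surjective_of_injective _ _ _ Subtype.val_injective
    have hWr : Module.finrank (ZMod 2) (LinearMap.ker π) = n - t := by
      have hrn := LinearMap.finrank_range_add_finrank_ker π
      rw [hV] at hrn
      have hrtop : LinearMap.range π = ⊤ := LinearMap.range_eq_top.mpr hπsurj
      rw [hrtop] at hrn
      have htop : Module.finrank (ZMod 2) (⊤ : Submodule (ZMod 2) ({x // x ∈ S} → ZMod 2))
          = t := by
        rw [finrank_top]
        simp [Module.finrank_pi, hS]
      rw [htop] at hrn
      omega
    have hinf : LinearMap.range (Θ (e2 i)) ⊓ LinearMap.ker π ≠ ⊥ := by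
      intro hbot
      have hsup := Submodule.finrank_sup_add_finrank_inf_eq
        (LinearMap.range (Θ (e2 i))) (LinearMap.ker π)
      have hle := Submodule.finrank_le (LinearMap.range (Θ (e2 i)) ⊔ LinearMap.ker π)
      rw [hV] at hle
      rw [hbot, finrank_bot, hΘrank, hWr] at hsup
      omega
    obtain ⟨w, hw, hw0⟩ := Submodule.exists_mem_ne_zero_of_ne_bot hinf
    have hwS : ∀ j ∈ S, w j = 0 := by
      intro j hj
      have : π w = 0 := hw.2
      have := congrFun this ⟨j, hj⟩
      exact this
    have hwt : (Finset.univ.filter (fun j => w j ≠ 0)).card ≤ n - t := by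
      have hsub : (Finset.univ.filter (fun j => w j ≠ 0)) ⊆ Sᶜ := by
        intro j hj
        simp only [Finset.mem_filter, Finset.mem_univ, true_and] at hj
        rw [Finset.mem_compl]
        intro hjS
        exact hj (hwS j hjS)
      calc (Finset.univ.filter (fun j => w j ≠ 0)).card ≤ Sᶜ.card :=
            Finset.card_le_card hsub
        _ = n - t := by rw [Finset.card_compl]; simp [hS]
    exact ⟨w, ⟨hw.1, hw0, hwt⟩, hwS⟩

theorem stmt_13 (m n t : ℕ) (hm : 1 < m) (hn : n = 2 ^ m)
    (ht1 : n < 2 * t) (ht2 : 2 * t ≤ n + m - 1) :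
    ∃ M : ℕ, 2 ^ (n - t - 1) < M ∧
      ∃ C : Fin M → Set (Fin n → ZMod 2), IsCoolingCode (ZMod 2) n t M C := by
  have hm3 : 3 ≤ m := by
    by_contra h
    have hm2 : m = 2 := by omega
    subst hm2
    norm_num at hn
    omega
  obtain ⟨C, hC⟩ := exists_code m n t hm3 hn ht1 ht2
  exact ⟨2 ^ (n - t - 1) + 1, by omega, C, hC⟩
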